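/- Let n ≥ 2 and let X be a graph. Fix two distinct finitely supported colourings c1, c2 : V(X) → Z/nZ and points a1 = (c1, f1) ∈ X(c1), a2 = (c2, f2) ∈ X(c2) in the lamplighter graph L_n(X) with the diligent metric. Then for every vertex x ∈ L_n(X), one has d(x, a1) ≤ 2(d(x, X(c1)) + d(x, X(c2))) + d(a1, a2) + d(X(c1), X(c2)), and the same bound holds for d(x, a2). -/

import Mathlib

open SimpleGraph

/-- The diligent metric on the lamplighter graph `L_n(X)`: the shortest length of a
path in the base graph from `x.2` to `y.2` visiting all vertices where the two
colourings differ. -/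
noncomputable def ddil {V : Type*} (n : ℕ) (G : SimpleGraph V)
    (x y : (V →₀ ZMod n) × V) : ℕ :=
  sInf {L | ∃ w : G.Walk x.2 y.2, w.length = L ∧ ∀ v, x.1 v ≠ y.1 v → v ∈ w.support}

/-- The diligent distance from a point of the lamplighter graph to the leaf `X(c)`. -/
noncomputable def dToLeaf {V : Type*} (n : ℕ) (G : SimpleGraph V)
    (x : (V →₀ ZMod n) × V) (c : V →₀ ZMod n) : ℕ :=
  sInf {L | ∃ p : V, ddil n G x (c, p) = L}

/-- The diligent distance between the leaves `X(c1)` and `X(c2)`. -/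
noncomputable def dLeaves {V : Type*} (n : ℕ) (G : SimpleGraph V)
    (c1 c2 : V →₀ ZMod n) : ℕ :=
  sInf {L | ∃ p q : V, ddil n G (c1, p) (c2, q) = L}

section Aux

variable {V : Type*} {G : SimpleGraph V} {n : ℕ}

private lemma exists_walk_through (hG : G.Connected) (s : Finset V) (p q : V) :
    ∃ w : G.Walk p q, ∀ v ∈ s, v ∈ w.support := by
  classical
  induction s using Finset.induction_on generalizing p with
  | empty => exact ⟨(hG p q).some, by simp⟩
  | insert a s ha ih =>
    obtain ⟨w2, hw2⟩ := ih _
    refine ⟨((hG p _).some.append w2), ?_⟩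
    intro v hv
    rw [SimpleGraph.Walk.mem_support_append_iff]
    rcases Finset.mem_insert.mp hv with rfl | hv
    · exact Or.inr w2.start_mem_support
    · exact Or.inr (hw2 v hv)

private lemma ddil_nonempty (hG : G.Connected) (x y : (V →₀ ZMod n) × V) :
    {L | ∃ w : G.Walk x.2 y.2, w.length = L ∧
      ∀ v, x.1 v ≠ y.1 v → v ∈ w.support}.Nonempty := by
  obtain ⟨w, hw⟩ := exists_walk_through hG (x.1 - y.1).support x.2 y.2
  refine ⟨w.length, w, rfl, fun v hv => hw v ?_⟩
  rw [Finsupp.mem_support_iff, Finsupp.sub_apply]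
  exact sub_ne_zero_of_ne hv

private lemma ddil_spec (hG : G.Connected) (x y : (V →₀ ZMod n) × V) :
    ∃ w : G.Walk x.2 y.2, w.length = ddil n G x y ∧
      ∀ v, x.1 v ≠ y.1 v → v ∈ w.support :=
  Nat.sInf_mem (ddil_nonempty hG x y)

private lemma ddil_le (x y : (V →₀ ZMod n) × V) (w : G.Walk x.2 y.2)
    (h : ∀ v, x.1 v ≠ y.1 v → v ∈ w.support) : ddil n G x y ≤ w.length :=
  Nat.sInf_le ⟨w, rfl, h⟩

private lemma ddil_comm (hG : G.Connected) (x y : (V →₀ ZMod n) × V) :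
    ddil n G x y = ddil n G y x := by
  have key : ∀ a b : (V →₀ ZMod n) × V, ddil n G a b ≤ ddil n G b a := by
    intro a b
    obtain ⟨w, hwl, hws⟩ := ddil_spec hG b a
    have := ddil_le a b w.reverse (fun v hv => by
      rw [SimpleGraph.Walk.support_reverse, List.mem_reverse]
      exact hws v (Ne.symm hv))
    rwa [SimpleGraph.Walk.length_reverse, hwl] at this
  exact le_antisymm (key x y) (key y x)

private lemma ddil_triangle (hG : G.Connected) (x y z : (V →₀ ZMod n) × V) :
    ddil n G x z ≤ ddil n G x y + ddil n G y z := by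
  obtain ⟨w1, hw1l, hw1s⟩ := ddil_spec hG x y
  obtain ⟨w2, hw2l, hw2s⟩ := ddil_spec hG y z
  have := ddil_le x z (w1.append w2) (fun v hv => by
    rw [SimpleGraph.Walk.mem_support_append_iff]
    by_cases h : x.1 v = y.1 v
    · exact Or.inr (hw2s v (fun h2 => hv (h.trans h2)))
    · exact Or.inl (hw1s v h))
  rwa [SimpleGraph.Walk.length_append, hw1l, hw2l] at this

private lemma ddil_leaf_le (hG : G.Connected) (c : V →₀ ZMod n) (p q v : V) :
    ddil n G (c, p) (c, q) ≤ G.dist p v + G.dist v q := by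
  obtain ⟨w1, hw1⟩ := hG.exists_walk_length_eq_dist p v
  obtain ⟨w2, hw2⟩ := hG.exists_walk_length_eq_dist v q
  have := ddil_le (G := G) (c, p) (c, q) (w1.append w2)
    (fun u hu => absurd rfl hu)
  rwa [SimpleGraph.Walk.length_append, hw1, hw2] at this

private lemma dist_le_of_mem {p q v : V} (w : G.Walk p q) (hv : v ∈ w.support) :
    G.dist p v ≤ w.length ∧ G.dist v q ≤ w.length := by
  classical
  have h1 : G.dist p v ≤ (w.takeUntil v hv).length := SimpleGraph.dist_le _
  have h2 : G.dist v q ≤ (w.dropUntil v hv).length := SimpleGraph.dist_le _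
  have h3 := congr_arg SimpleGraph.Walk.length (w.take_spec hv)
  rw [SimpleGraph.Walk.length_append] at h3
  omega

end Aux

/-- For distinct colourings `c1 ≠ c2`, points `a1 = (c1, f1)` and `a2 = (c2, f2)` on
the corresponding leaves, and any vertex `x` of the lamplighter graph with the diligent
metric, `d(x, a1), d(x, a2) ≤ 2(d(x, X(c1)) + d(x, X(c2))) + d(a1, a2) + d(X(c1), X(c2))`. -/
theorem stmt19 {V : Type*} (n : ℕ) (hn : 2 ≤ n) (G : SimpleGraph V) (hG : G.Connected)
    (c1 c2 : V →₀ ZMod n) (hne : c1 ≠ c2) (f1 f2 : V)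
    (x : (V →₀ ZMod n) × V) :
    ddil n G x (c1, f1) ≤ 2 * (dToLeaf n G x c1 + dToLeaf n G x c2) +
        ddil n G (c1, f1) (c2, f2) + dLeaves n G c1 c2 ∧
    ddil n G x (c2, f2) ≤ 2 * (dToLeaf n G x c1 + dToLeaf n G x c2) +
        ddil n G (c1, f1) (c2, f2) + dLeaves n G c1 c2 := by
  -- a vertex where the two colourings differ
  obtain ⟨v, hv⟩ : ∃ v, c1 v ≠ c2 v := by
    by_contra h
    push_neg at h
    exact hne (Finsupp.ext h)
  -- points realizing the distances to the leaves
  obtain ⟨p1, hp1⟩ : ∃ p, ddil n G x (c1, p) = dToLeaf n G x c1 :=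
    Nat.sInf_mem (⟨ddil n G x (c1, f1), f1, rfl⟩ :
      {L | ∃ p : V, ddil n G x (c1, p) = L}.Nonempty)
  obtain ⟨p2, hp2⟩ : ∃ p, ddil n G x (c2, p) = dToLeaf n G x c2 :=
    Nat.sInf_mem (⟨ddil n G x (c2, f2), f2, rfl⟩ :
      {L | ∃ p : V, ddil n G x (c2, p) = L}.Nonempty)
  set d1 := dToLeaf n G x c1 with hd1
  set d2 := dToLeaf n G x c2 with hd2
  set D := ddil n G (c1, f1) (c2, f2) with hD
  -- d((c1,p1),(c2,p2)) ≤ d1 + d2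
  have hS : ddil n G (c1, p1) (c2, p2) ≤ d1 + d2 := by
    calc ddil n G (c1, p1) (c2, p2)
        ≤ ddil n G (c1, p1) x + ddil n G x (c2, p2) := ddil_triangle hG _ _ _
      _ = d1 + d2 := by rw [ddil_comm hG, hp1, hp2]
  -- a realizing walk between (c1,p1) and (c2,p2) passes through v
  obtain ⟨w, hwl, hws⟩ := ddil_spec hG (n := n) (c1, p1) (c2, p2)
  have hvw : v ∈ w.support := hws v hv
  have hpv := dist_le_of_mem w hvw
  have hwle : w.length ≤ d1 + d2 := by rw [hwl]; exact hS
  have h1 : G.dist p1 v ≤ d1 + d2 := le_trans hpv.1 hwle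
  have h2 : G.dist v p2 ≤ d1 + d2 := le_trans hpv.2 hwle
  -- a realizing walk between a1 and a2 passes through v
  obtain ⟨w', hwl', hws'⟩ := ddil_spec hG (n := n) (c1, f1) (c2, f2)
  have hvw' : v ∈ w'.support := hws' v hv
  have hfv := dist_le_of_mem w' hvw'
  have h3 : G.dist f1 v ≤ D := by rw [hD, ← hwl']; exact hfv.1
  have h4 : G.dist v f2 ≤ D := by rw [hD, ← hwl']; exact hfv.2
  constructor
  · have t1 : ddil n G x (c1, f1) ≤ ddil n G x (c1, p1) + ddil n G (c1, p1) (c1, f1) :=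
      ddil_triangle hG _ _ _
    have t2 : ddil n G (c1, p1) (c1, f1) ≤ G.dist p1 v + G.dist v f1 :=
      ddil_leaf_le hG c1 p1 f1 v
    have t3 : G.dist v f1 = G.dist f1 v := SimpleGraph.dist_comm
    rw [hp1] at t1
    omega
  · have t1 : ddil n G x (c2, f2) ≤ ddil n G x (c2, p2) + ddil n G (c2, p2) (c2, f2) :=
      ddil_triangle hG _ _ _
    have t2 : ddil n G (c2, p2) (c2, f2) ≤ G.dist p2 v + G.dist v f2 :=
      ddil_leaf_le hG c2 p2 f2 v
    have t3 : G.dist p2 v = G.dist v p2 := SimpleGraph.dist_comm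
    rw [hp2] at t1
    omega
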